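/- arXiv:1507.02030 — 7 statements merged into one kernel-verified Lean document; each statement's English description precedes it below -/
import Mathlib

section
/- Let f : ℝ^d → ℝ be differentiable, let ε, κ > 0, and let x, x* ∈ ℝ^d. If f is (ε,κ,x*)-SLQC at x, ∇f(x) ≠ 0, and f(x) − f(x*) > ε, then ⟨∇f(x)/‖∇f(x)‖, x − x*⟩ ≥ ε/κ; consequently, for η = ε/κ, the normalized-gradient step satisfies ‖x − η·∇f(x)/‖∇f(x)‖ − x*‖² ≤ ‖x − x*‖² − ε²/κ². -/
open RealInnerProductSpace

theorem stmt_1 {d : ℕ} (ε κ : ℝ) (hε : 0 < ε) (hκ : 0 < κ)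
    (f : EuclideanSpace ℝ (Fin d) → ℝ) (hf : Differentiable ℝ f)
    (x xstar : EuclideanSpace ℝ (Fin d))
    (hSLQC : f x - f xstar ≤ ε ∨
      (gradient f x ≠ 0 ∧
        ∀ y ∈ Metric.closedBall xstar (ε / κ), ⟪gradient f x, y - x⟫ ≤ 0))
    (hgrad : gradient f x ≠ 0)
    (hgap : f x - f xstar > ε)
    (η : ℝ) (hη : η = ε / κ) :
    ⟪‖gradient f x‖⁻¹ • gradient f x, x - xstar⟫ ≥ ε / κ ∧
      ‖x - η • (‖gradient f x‖⁻¹ • gradient f x) - xstar‖ ^ 2 ≤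
        ‖x - xstar‖ ^ 2 - ε ^ 2 / κ ^ 2 := by
  set g := gradient f x with hg
  have hgn : (0:ℝ) < ‖g‖ := norm_pos_iff.mpr hgrad
  set u := ‖g‖⁻¹ • g with hu
  have hun : ‖u‖ = 1 := by
    rw [hu, norm_smul, norm_inv, norm_norm, inv_mul_cancel₀ (ne_of_gt hgn)]
  have hcase : ∀ y ∈ Metric.closedBall xstar (ε / κ), ⟪g, y - x⟫ ≤ 0 := by
    rcases hSLQC with h | h
    · exact absurd h (not_le.mpr hgap)
    · exact h.2
  have hεκ : (0:ℝ) < ε / κ := div_pos hε hκ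
  have hy : xstar + (ε / κ) • u ∈ Metric.closedBall xstar (ε / κ) := by
    rw [Metric.mem_closedBall, dist_eq_norm]
    rw [add_sub_cancel_left, norm_smul, hun, mul_one, Real.norm_eq_abs, abs_of_pos hεκ]
  have h1 := hcase _ hy
  have hinner : ⟪g, u⟫ = ‖g‖ := by
    rw [hu, real_inner_smul_right, real_inner_self_eq_norm_sq]
    field_simp
  have key : ⟪u, x - xstar⟫ ≥ ε / κ := by
    have h2 : ⟪g, xstar + (ε / κ) • u - x⟫ = ⟪g, xstar - x⟫ + (ε / κ) * ‖g‖ := by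
      rw [add_sub_right_comm, inner_add_right, real_inner_smul_right, hinner]
    have h3 : ⟪g, xstar - x⟫ + (ε / κ) * ‖g‖ ≤ 0 := h2 ▸ h1
    have h4 : (ε / κ) * ‖g‖ ≤ ⟪g, x - xstar⟫ := by
      have : ⟪g, x - xstar⟫ = -⟪g, xstar - x⟫ := by rw [← inner_neg_right, neg_sub]
      linarith [this]
    have h5 : ⟪u, x - xstar⟫ = ‖g‖⁻¹ * ⟪g, x - xstar⟫ := by
      rw [hu, real_inner_smul_left]
    rw [h5]
    calc ε / κ = ‖g‖⁻¹ * ((ε / κ) * ‖g‖) := by field_simp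
    _ ≤ ‖g‖⁻¹ * ⟪g, x - xstar⟫ := by
        apply mul_le_mul_of_nonneg_left h4 (le_of_lt (inv_pos.mpr hgn))
  refine ⟨key, ?_⟩
  have hexp : ‖x - η • u - xstar‖ ^ 2 =
      ‖x - xstar‖ ^ 2 - 2 * η * ⟪u, x - xstar⟫ + η ^ 2 := by
    have : x - η • u - xstar = (x - xstar) - η • u := by abel
    rw [this, norm_sub_sq_real, real_inner_smul_right, norm_smul, real_inner_comm]
    simp [hun, mul_pow, abs_of_pos (hη ▸ hεκ : 0 < η)]
    ring
  rw [hexp, hη]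
  have h6 : 2 * (ε / κ) * (ε / κ) ≤ 2 * (ε / κ) * ⟪u, x - xstar⟫ :=
    mul_le_mul_of_nonneg_left key (by positivity)
  have : (ε / κ) ^ 2 = ε ^ 2 / κ ^ 2 := by ring
  nlinarith [h6]
end

section
/- Let W > 0, let x_1, …, x_m be points in the closed unit ball of ℝ^d, let w* ∈ ℝ^d with ‖w*‖ ≤ W, and set y_i = σ(⟨w*, x_i⟩) for i = 1,…,m, where σ(z) = 1/(1 + e^{−z}). Define the empirical error err_m(w) = (1/m)·Σ_{i=1}^m (y_i − σ(⟨w, x_i⟩))². Then for every ε > 0 and every w in the closed ball of radius W centered at the origin, err_m is (ε, e^W, w*)-SLQC at w. -/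
open RealInnerProductSpace

noncomputable def sigmoid (z : ℝ) : ℝ := 1 / (1 + Real.exp (-z))

noncomputable def dsig (z : ℝ) : ℝ := Real.exp (-z) / (1 + Real.exp (-z))^2

lemma sigmoid_pos (z : ℝ) : 0 < sigmoid z := by unfold sigmoid; positivity

lemma sigmoid_lt_one (z : ℝ) : sigmoid z < 1 := by
  unfold sigmoid
  rw [div_lt_one (by positivity)]
  linarith [Real.exp_pos (-z)]

lemma dsig_pos (z : ℝ) : 0 < dsig z := by unfold dsig; positivity

lemma dsig_le (z : ℝ) : dsig z ≤ 1/4 := by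
  unfold dsig
  rw [div_le_iff₀ (by positivity)]
  nlinarith [sq_nonneg (1 - Real.exp (-z)), Real.exp_pos (-z)]

lemma dsig_ge {W z : ℝ} (hz : |z| ≤ W) : Real.exp (-W) / 4 ≤ dsig z := by
  have h1 : Real.exp (-W) ≤ Real.exp (-z) := Real.exp_le_exp.2 (by cases abs_le.1 hz; linarith)
  have h2 : Real.exp (-z) ≤ Real.exp W := Real.exp_le_exp.2 (by cases abs_le.1 hz; linarith)
  have hWe : 1 ≤ Real.exp W := Real.one_le_exp ((abs_nonneg z).trans hz)
  have hEW : Real.exp (-W) * Real.exp W = 1 := by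
    rw [← Real.exp_add]; simp
  unfold dsig
  rw [div_le_div_iff₀ (by norm_num) (by positivity)]
  set t := Real.exp (-z)
  have ht : 0 < t := Real.exp_pos _
  nlinarith [mul_le_mul_of_nonneg_left h2 (Real.exp_pos (-W)).le,
    mul_le_mul_of_nonneg_left h2 ht.le]

lemma hasDerivAt_sigmoid (z : ℝ) : HasDerivAt sigmoid (dsig z) z := by
  have h : HasDerivAt (fun t : ℝ => 1 + Real.exp (-t)) (-Real.exp (-z)) z := by
    simpa using ((Real.hasDerivAt_exp (-z)).comp z ((hasDerivAt_id z).neg)).const_add 1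
  have h2 := h.inv (by positivity)
  have he : sigmoid = fun t : ℝ => (1 + Real.exp (-t))⁻¹ := by
    funext t; simp [sigmoid, one_div]
  rw [he]
  exact h2.congr_deriv (by unfold dsig; ring)

lemma sigmoid_key (a b : ℝ) : 4*(sigmoid b - sigmoid a)^2 ≤ (sigmoid b - sigmoid a)*(b-a) := by
  have main : ∀ p q : ℝ, p < q → 4*(sigmoid q - sigmoid p)^2 ≤ (sigmoid q - sigmoid p)*(q-p) := by
    intro p q hpq
    obtain ⟨c, _, hc⟩ := exists_hasDerivAt_eq_slope sigmoid dsig hpq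
      (fun t _ => (hasDerivAt_sigmoid t).continuousAt.continuousWithinAt)
      (fun t _ => hasDerivAt_sigmoid t)
    rw [eq_div_iff (by intro h; apply hpq.ne; linarith : q - p ≠ 0)] at hc
    rw [← hc]
    nlinarith [dsig_pos c, dsig_le c, sq_nonneg (q - p)]
  rcases lt_trichotomy a b with h | h | h
  · exact main a b h
  · simp [h]
  · have := main b a h; nlinarith

theorem stmt_8 {d m : ℕ} (W : ℝ) (hW : 0 < W)
    (x : Fin m → EuclideanSpace ℝ (Fin d)) (hx : ∀ i, ‖x i‖ ≤ 1)
    (wstar : EuclideanSpace ℝ (Fin d)) (hwstar : ‖wstar‖ ≤ W)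
    (y : Fin m → ℝ) (hy : ∀ i, y i = sigmoid ⟪wstar, x i⟫)
    (err : EuclideanSpace ℝ (Fin d) → ℝ)
    (herr : ∀ w, err w = (1 / (m : ℝ)) * ∑ i, (y i - sigmoid ⟪w, x i⟫) ^ 2)
    (ε : ℝ) (hε : 0 < ε) (w : EuclideanSpace ℝ (Fin d)) (hw : w ∈ Metric.closedBall 0 W) :
    err w - err wstar ≤ ε ∨
      (gradient err w ≠ 0 ∧
        ∀ v ∈ Metric.closedBall wstar (ε / Real.exp W), ⟪gradient err w, v - w⟫ ≤ 0) := by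
  -- error at the optimum is 0
  have herrstar : err wstar = 0 := by
    rw [herr wstar]
    have : ∀ i : Fin m, (y i - sigmoid ⟪wstar, x i⟫) ^ 2 = 0 := by
      intro i; rw [hy i]; ring
    rw [Finset.sum_congr rfl (fun i _ => this i)]; simp
  by_cases hle : err w - err wstar ≤ ε
  · exact Or.inl hle
  right
  push_neg at hle
  rw [herrstar, sub_zero] at hle
  -- m ≠ 0
  have hm0 : m ≠ 0 := by
    intro h
    subst h
    rw [herr w] at hle
    simp at hle
    linarith
  have hm : 0 < (m:ℝ) := by exact_mod_cast Nat.pos_of_ne_zero hm0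
  have hwn : ‖w‖ ≤ W := by rwa [Metric.mem_closedBall, dist_zero_right] at hw
  set a : Fin m → ℝ := fun i => ⟪w, x i⟫ with ha
  set b : Fin m → ℝ := fun i => ⟪wstar, x i⟫ with hb
  have habs : ∀ i, |a i| ≤ W := by
    intro i
    calc |a i| ≤ ‖w‖ * ‖x i‖ := abs_real_inner_le_norm _ _
      _ ≤ W * 1 := mul_le_mul hwn (hx i) (norm_nonneg _) hW.le
      _ = W := mul_one W
  set c : Fin m → ℝ := fun i => (1/(m:ℝ)) * (2 * (y i - sigmoid (a i)) * -(dsig (a i))) with hc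
  set G : EuclideanSpace ℝ (Fin d) := ∑ i, c i • x i with hG
  -- gradient computation
  have hgrad : HasGradientAt err G w := by
    rw [hasGradientAt_iff_hasFDerivAt]
    have herr' : err = fun v => (1/(m:ℝ)) * ∑ i, (y i - sigmoid ⟪v, x i⟫)^2 := funext herr
    have hi : ∀ i : Fin m, HasFDerivAt
        (fun v : EuclideanSpace ℝ (Fin d) => (y i - sigmoid ⟪v, x i⟫)^2)
        ((2 * (y i - sigmoid (a i)) * -(dsig (a i))) • innerSL ℝ (x i)) w := by
      intro i
      have hlin : HasFDerivAt (fun v : EuclideanSpace ℝ (Fin d) => (⟪v, x i⟫ : ℝ))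
          (innerSL ℝ (x i)) w := by
        exact (innerSL ℝ (x i)).hasFDerivAt.congr_of_eventuallyEq
          (Filter.Eventually.of_forall fun v => by
            simp only [innerSL_apply_apply]; exact real_inner_comm _ _)
      have hsq : HasDerivAt (fun t : ℝ => (y i - sigmoid t)^2)
          (2 * (y i - sigmoid (a i)) * -(dsig (a i))) (a i) := by
        have h1 : HasDerivAt (fun t => y i - sigmoid t) (-(dsig (a i))) (a i) :=
          (hasDerivAt_sigmoid (a i)).const_sub (y i)
        have := h1.fun_pow 2
        simpa using this
      exact hsq.comp_hasFDerivAt w hlin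
    have hsum := (HasFDerivAt.fun_sum (fun i (_ : i ∈ Finset.univ) => hi i)).const_mul ((1:ℝ)/m)
    have hdual : (InnerProductSpace.toDual ℝ (EuclideanSpace ℝ (Fin d))) G
        = ((1:ℝ)/m) • ∑ i, (2 * (y i - sigmoid (a i)) * -(dsig (a i))) • innerSL ℝ (x i) := by
      apply ContinuousLinearMap.ext
      intro v
      simp only [InnerProductSpace.toDual_apply_apply, hG, sum_inner, real_inner_smul_left,
        ContinuousLinearMap.smul_apply, ContinuousLinearMap.sum_apply, innerSL_apply_apply,
        smul_eq_mul, Finset.mul_sum]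
      apply Finset.sum_congr rfl
      intro i _
      rw [hc]; ring
    rw [herr', hdual]
    exact hsum
  have hGg : gradient err w = G := hgrad.gradient
  -- err w in terms of sigmoids
  have herrw : err w = (1/(m:ℝ)) * ∑ i, (sigmoid (a i) - sigmoid (b i))^2 := by
    rw [herr w]
    congr 1
    apply Finset.sum_congr rfl
    intro i _
    rw [hy i]; ring
  -- key inner product bound
  have hkey : ⟪G, wstar - w⟫ ≤ -(2 * Real.exp (-W)) * err w := by
    have hGin : ⟪G, wstar - w⟫ = ∑ i, c i * (b i - a i) := by
      rw [hG, sum_inner]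
      apply Finset.sum_congr rfl
      intro i _
      rw [real_inner_smul_left, inner_sub_right]
      congr 2
      · exact real_inner_comm _ _
      · exact real_inner_comm _ _
    rw [hGin]
    have hstep : ∀ i : Fin m, c i * (b i - a i)
        ≤ -((2/(m:ℝ)) * Real.exp (-W)) * (sigmoid (a i) - sigmoid (b i))^2 := by
      intro i
      have hkey2 : (sigmoid (a i) - sigmoid (b i)) * (b i - a i)
          ≤ -(4 * (sigmoid (a i) - sigmoid (b i))^2) := by
        nlinarith [sigmoid_key (b i) (a i)]
      have hD := dsig_pos (a i)
      have hDge := dsig_ge (habs i)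
      have h1 : (2/(m:ℝ)) * dsig (a i) * ((sigmoid (a i) - sigmoid (b i)) * (b i - a i))
          ≤ (2/(m:ℝ)) * dsig (a i) * (-(4 * (sigmoid (a i) - sigmoid (b i))^2)) :=
        mul_le_mul_of_nonneg_left hkey2 (by positivity)
      have h2 : Real.exp (-W) / 4 * (sigmoid (a i) - sigmoid (b i))^2
          ≤ dsig (a i) * (sigmoid (a i) - sigmoid (b i))^2 :=
        mul_le_mul_of_nonneg_right hDge (sq_nonneg _)
      have hci : c i * (b i - a i)
          = (2/(m:ℝ)) * dsig (a i) * ((sigmoid (a i) - sigmoid (b i)) * (b i - a i)) := by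
        simp only [hc, hb]; rw [hy i]; ring
      rw [hci]
      calc (2/(m:ℝ)) * dsig (a i) * ((sigmoid (a i) - sigmoid (b i)) * (b i - a i))
          ≤ (2/(m:ℝ)) * dsig (a i) * (-(4 * (sigmoid (a i) - sigmoid (b i))^2)) := h1
        _ = -(8/(m:ℝ)) * (dsig (a i) * (sigmoid (a i) - sigmoid (b i))^2) := by ring
        _ ≤ -(8/(m:ℝ)) * (Real.exp (-W) / 4 * (sigmoid (a i) - sigmoid (b i))^2) := by
            exact mul_le_mul_of_nonpos_left h2 (neg_nonpos.mpr (by positivity))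
        _ = -((2/(m:ℝ)) * Real.exp (-W)) * (sigmoid (a i) - sigmoid (b i))^2 := by ring
    calc ∑ i, c i * (b i - a i)
        ≤ ∑ i, -((2/(m:ℝ)) * Real.exp (-W)) * (sigmoid (a i) - sigmoid (b i))^2 :=
          Finset.sum_le_sum fun i _ => hstep i
      _ = -(2 * Real.exp (-W)) * err w := by
          rw [herrw, ← mul_assoc, Finset.mul_sum]
          apply Finset.sum_congr rfl
          intro i _; ring
  -- norm bound
  have hnormG : ‖G‖ ≤ 1/2 := by
    have hci : ∀ i : Fin m, ‖c i • x i‖ ≤ (1/(m:ℝ)) * (1/2) := by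
      intro i
      have hs1 : |y i - sigmoid (a i)| ≤ 1 := by
        rw [hy i, abs_le]
        have h1 := sigmoid_pos (a i)
        have h2 := sigmoid_lt_one (a i)
        have h3 := sigmoid_pos (⟪wstar, x i⟫ : ℝ)
        have h4 := sigmoid_lt_one (⟪wstar, x i⟫ : ℝ)
        exact ⟨by linarith, by linarith⟩
      have hD := dsig_pos (a i)
      have hD4 := dsig_le (a i)
      rw [norm_smul]
      have hcn : ‖c i‖ ≤ 1/(m:ℝ) * (1/2) := by
        rw [Real.norm_eq_abs]
        have hceq : c i = (1/(m:ℝ)) * (2 * (y i - sigmoid (a i)) * -(dsig (a i))) := rfl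
        rw [hceq, abs_mul, abs_mul, abs_mul, abs_neg, abs_of_nonneg hD.le,
          abs_of_nonneg (by positivity : (0:ℝ) ≤ 1/(m:ℝ)),
          (by norm_num : |(2:ℝ)| = 2)]
        have h5 : |y i - sigmoid (a i)| * dsig (a i) ≤ 1 * (1/4) :=
          mul_le_mul hs1 hD4 hD.le zero_le_one
        nlinarith [mul_le_mul_of_nonneg_left h5 (by positivity : (0:ℝ) ≤ 1/(m:ℝ))]
      calc ‖c i‖ * ‖x i‖ ≤ (1/(m:ℝ) * (1/2)) * 1 :=
            mul_le_mul hcn (hx i) (norm_nonneg _) (by positivity)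
        _ = 1/(m:ℝ) * (1/2) := mul_one _
    calc ‖G‖ ≤ ∑ i, ‖c i • x i‖ := norm_sum_le _ _
      _ ≤ ∑ i, (1/(m:ℝ)) * (1/2) := Finset.sum_le_sum fun i _ => hci i
      _ = 1/2 := by
          rw [Finset.sum_const, Finset.card_univ, Fintype.card_fin, nsmul_eq_mul]
          field_simp
  -- conclude
  rw [hGg]
  have hexp := Real.exp_pos (-W)
  constructor
  · intro h0
    rw [h0] at hkey
    simp only [inner_zero_left] at hkey
    nlinarith
  · intro v hv
    have hvd : ‖v - wstar‖ ≤ ε / Real.exp W := by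
      rwa [Metric.mem_closedBall, dist_eq_norm] at hv
    have hsplit : ⟪G, v - w⟫ = ⟪G, wstar - w⟫ + ⟪G, v - wstar⟫ := by
      rw [← inner_add_right]
      congr 1
      abel
    have h2 : ⟪G, v - wstar⟫ ≤ (1/2) * (ε / Real.exp W) := by
      calc ⟪G, v - wstar⟫ ≤ ‖G‖ * ‖v - wstar‖ := real_inner_le_norm _ _
        _ ≤ (1/2) * (ε / Real.exp W) :=
            mul_le_mul hnormG hvd (norm_nonneg _) (by norm_num)
    have heq : ε / Real.exp W = ε * Real.exp (-W) := by
      rw [Real.exp_neg]; ring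
    rw [hsplit]
    rw [heq] at h2
    nlinarith
end

section
/- In ℝ², let x₁ = (0, −log 4), x₂ = (−log 4, 0), y₁ = y₂ = 1/5, and define err(w) = (1/2)·(1/5 − σ(⟨w, x₁⟩))² + (1/2)·(1/5 − σ(⟨w, x₂⟩))², where σ(z) = 1/(1 + e^{−z}). Then for w₁ = (3,1) and w₂ = (1,3) one has err(w₁) = err(w₂) ≤ 0.018 while err(w₁/2 + w₂/2) ≥ 0.019; in particular the 0.018-sublevel set of err is not convex, so err is not quasi-convex. -/
open RealInnerProductSpace

noncomputable def sigmoid9 (z : ℝ) : ℝ := 1 / (1 + Real.exp (-z))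

noncomputable def vec9 (a b : ℝ) : EuclideanSpace ℝ (Fin 2) :=
  (WithLp.equiv 2 (Fin 2 → ℝ)).symm ![a, b]

noncomputable def err9 (w : EuclideanSpace ℝ (Fin 2)) : ℝ :=
  (1 / 2) * (1 / 5 - sigmoid9 ⟪w, vec9 0 (-Real.log 4)⟫) ^ 2 +
    (1 / 2) * (1 / 5 - sigmoid9 ⟪w, vec9 (-Real.log 4) 0⟫) ^ 2

lemma inner_vec9 (a b c d : ℝ) : ⟪vec9 a b, vec9 c d⟫ = a * c + b * d := by
  simp [vec9, PiLp.inner_apply, Fin.sum_univ_two]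
  ring

lemma sig_n9 (n : ℕ) : sigmoid9 (-((n : ℝ) * Real.log 4)) = 1 / (1 + 4 ^ n) := by
  simp only [sigmoid9, neg_neg, Real.exp_nat_mul, Real.exp_log (by norm_num : (4:ℝ) > 0)]

lemma err9_nat (a b : ℕ) :
    err9 (vec9 (a : ℝ) (b : ℝ)) =
      1 / 2 * (1 / 5 - 1 / (1 + 4 ^ b)) ^ 2 + 1 / 2 * (1 / 5 - 1 / (1 + 4 ^ a)) ^ 2 := by
  have e1 : ⟪vec9 (a : ℝ) (b : ℝ), vec9 0 (-Real.log 4)⟫ = -((b : ℝ) * Real.log 4) := by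
    rw [inner_vec9]; ring
  have e2 : ⟪vec9 (a : ℝ) (b : ℝ), vec9 (-Real.log 4) 0⟫ = -((a : ℝ) * Real.log 4) := by
    rw [inner_vec9]; ring
  rw [err9, e1, e2, sig_n9, sig_n9]

lemma mid9 : (1 / 2 : ℝ) • vec9 3 1 + (1 / 2 : ℝ) • vec9 1 3 = vec9 2 2 := by
  apply (WithLp.equiv 2 (Fin 2 → ℝ)).injective
  ext i
  fin_cases i <;> simp [vec9] <;> norm_num

lemma err9_31 : err9 (vec9 3 1) = 1 / 2 * (12 / 65) ^ 2 := by
  have := err9_nat 3 1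
  norm_num at this ⊢
  linarith

lemma err9_13 : err9 (vec9 1 3) = 1 / 2 * (12 / 65) ^ 2 := by
  have := err9_nat 1 3
  norm_num at this ⊢
  linarith

lemma err9_22 : err9 (vec9 2 2) = (12 / 85) ^ 2 := by
  have := err9_nat 2 2
  norm_num at this ⊢
  linarith

theorem stmt_9 :
    err9 (vec9 3 1) = err9 (vec9 1 3) ∧
      err9 (vec9 3 1) ≤ 0.018 ∧
      err9 ((1 / 2 : ℝ) • vec9 3 1 + (1 / 2 : ℝ) • vec9 1 3) ≥ 0.019 ∧
      ¬ Convex ℝ {w : EuclideanSpace ℝ (Fin 2) | err9 w ≤ 0.018} := by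
  have h31 := err9_31
  have h13 := err9_13
  have hmid : err9 ((1 / 2 : ℝ) • vec9 3 1 + (1 / 2 : ℝ) • vec9 1 3) = (12 / 85) ^ 2 := by
    rw [mid9, err9_22]
  refine ⟨by rw [h31, h13], by rw [h31]; norm_num, by rw [hmid]; norm_num, ?_⟩
  intro hconv
  have hm := hconv (x := vec9 3 1) (y := vec9 1 3)
    (by simp only [Set.mem_setOf_eq, h31]; norm_num)
    (by simp only [Set.mem_setOf_eq, h13]; norm_num)
    (a := 1/2) (b := 1/2) (by norm_num) (by norm_num) (by norm_num)
  simp only [Set.mem_setOf_eq, hmid] at hm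
  norm_num at hm
end

section
/- Let ε > 0 and G > 0. Let f : ℝ^d → ℝ be differentiable and strictly-quasi-convex, let x* be a global minimizer of f, and assume f is (G, ε/G, x*)-locally-Lipschitz. Then f is (ε, G, x*)-SLQC at every x ∈ ℝ^d. -/
open RealInnerProductSpace

theorem stmt_16 {d : ℕ} (ε G : ℝ) (hε : 0 < ε) (hG : 0 < G)
    (f : EuclideanSpace ℝ (Fin d) → ℝ) (hf : Differentiable ℝ f)
    (hqc : ∀ x y : EuclideanSpace ℝ (Fin d), f y ≤ f x → ⟪gradient f x, y - x⟫ ≤ 0)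
    (hstrict : ∀ y : EuclideanSpace ℝ (Fin d), f y > ⨅ z, f z → gradient f y ≠ 0)
    (xstar : EuclideanSpace ℝ (Fin d)) (hmin : ∀ y, f xstar ≤ f y)
    (hlip : ∀ u ∈ Metric.closedBall xstar (ε / G), ∀ v ∈ Metric.closedBall xstar (ε / G),
      |f u - f v| ≤ G * ‖u - v‖) :
    ∀ x : EuclideanSpace ℝ (Fin d),
      f x - f xstar ≤ ε ∨
        (gradient f x ≠ 0 ∧
          ∀ y ∈ Metric.closedBall xstar (ε / G), ⟪gradient f x, y - x⟫ ≤ 0) := by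
  intro x
  by_cases hx : f x - f xstar ≤ ε
  · exact Or.inl hx
  · push_neg at hx
    right
    have hinf : (⨅ z, f z) = f xstar :=
      le_antisymm (ciInf_le ⟨f xstar, fun v ⟨z, hz⟩ => hz ▸ hmin z⟩ xstar)
        (le_ciInf hmin)
    constructor
    · exact hstrict x (by rw [hinf]; linarith)
    · intro y hy
      apply hqc
      have h0 : xstar ∈ Metric.closedBall xstar (ε / G) :=
        Metric.mem_closedBall_self (by positivity)
      have := hlip y hy xstar h0
      have hyn : G * ‖y - xstar‖ ≤ ε := by
        have : ‖y - xstar‖ ≤ ε / G := by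
          rw [← dist_eq_norm]; exact hy
        calc G * ‖y - xstar‖ ≤ G * (ε / G) := by nlinarith
          _ = ε := by field_simp
      have := abs_le.mp (hlip y hy xstar h0)
      linarith [this.2]
end

section
/- Let ε > 0 and β > 0, let f : ℝ^d → ℝ be differentiable, and let x* be a global minimizer of f. Assume f is (β, √(2ε/β), x*)-locally-smooth. Then for every x ∈ ℝ^d with f(x) − f(x*) > ε, the closed ball of radius √(2ε/β) centered at x* is contained in the sublevel set S_f(x) = {y ∈ ℝ^d : f(y) ≤ f(x)}. -/
open RealInnerProductSpace

theorem stmt_17 {d : ℕ} (ε β : ℝ) (hε : 0 < ε) (hβ : 0 < β)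
    (f : EuclideanSpace ℝ (Fin d) → ℝ) (hf : Differentiable ℝ f)
    (xstar : EuclideanSpace ℝ (Fin d)) (hmin : ∀ y, f xstar ≤ f y)
    (hsmooth : ∀ u ∈ Metric.closedBall xstar (Real.sqrt (2 * ε / β)),
      ∀ v ∈ Metric.closedBall xstar (Real.sqrt (2 * ε / β)),
        |f v - f u - ⟪gradient f v, u - v⟫| ≤ β / 2 * ‖u - v‖ ^ 2)
    (x : EuclideanSpace ℝ (Fin d)) (hx : f x - f xstar > ε) :
    Metric.closedBall xstar (Real.sqrt (2 * ε / β)) ⊆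
      {y : EuclideanSpace ℝ (Fin d) | f y ≤ f x} := by
  intro y hy
  have hr : (0:ℝ) ≤ Real.sqrt (2 * ε / β) := Real.sqrt_nonneg _
  have hxs : xstar ∈ Metric.closedBall xstar (Real.sqrt (2 * ε / β)) := by
    simpa using hr
  have hlm : IsLocalMin f xstar := IsMinOn.isLocalMin (fun z _ => hmin z) Filter.univ_mem
  have hgrad : gradient f xstar = 0 := by
    rw [gradient, hlm.fderiv_eq_zero]; simp
  have h := hsmooth y hy xstar hxs
  rw [hgrad] at h
  simp only [inner_zero_left, sub_zero] at h
  have hnorm : ‖y - xstar‖ ^ 2 ≤ 2 * ε / β := by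
    have h1 : ‖y - xstar‖ ≤ Real.sqrt (2 * ε / β) := by
      rw [← dist_eq_norm]; exact Metric.mem_closedBall.mp hy
    calc ‖y - xstar‖ ^ 2 ≤ Real.sqrt (2 * ε / β) ^ 2 := by
          exact pow_le_pow_left₀ (norm_nonneg _) h1 2
      _ = 2 * ε / β := Real.sq_sqrt (by positivity)
  have hbound : β / 2 * ‖y - xstar‖ ^ 2 ≤ ε := by
    have := mul_le_mul_of_nonneg_left hnorm (by positivity : (0:ℝ) ≤ β / 2)
    have heq : β / 2 * (2 * ε / β) = ε := by field_simp
    linarith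
  have := (abs_le.mp h).1
  show f y ≤ f x
  linarith
end

section
/- Let γ > 0, let x_1, …, x_m be points in the closed unit ball of ℝ^d, and let w* ∈ ℝ^d satisfy |⟨w*, x_i⟩| ≥ γ for all i. Let φ(z) = 1 if z ≥ 0 and φ(z) = 0 otherwise, and set y_i = φ(⟨w*, x_i⟩). Define err_m(w) = (1/m)·Σ_{i=1}^m (y_i − φ(⟨w, x_i⟩))² and the direction oracle 𝒢(w) = (1/m)·Σ_{i=1}^m (φ(⟨w, x_i⟩) − y_i)·x_i. Then for every ε ∈ (0,1) and every w ∈ ℝ^d: either err_m(w) − err_m(w*) ≤ ε, or else ‖𝒢(w)‖ > 0 and ⟨𝒢(w), v − w⟩ ≤ 0 for every v in the closed ball of radius γε/2 centered at w*. (That is, err_m is (ε, 2/γ, w*)-SLQC at w with respect to the direction oracle 𝒢.) -/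
open RealInnerProductSpace Classical

noncomputable def phi18 (z : ℝ) : ℝ := if z ≥ 0 then 1 else 0

theorem stmt_18 {d m : ℕ} (γ : ℝ) (hγ : 0 < γ)
    (x : Fin m → EuclideanSpace ℝ (Fin d)) (hx : ∀ i, ‖x i‖ ≤ 1)
    (wstar : EuclideanSpace ℝ (Fin d)) (hmargin : ∀ i, |⟪wstar, x i⟫| ≥ γ)
    (y : Fin m → ℝ) (hy : ∀ i, y i = phi18 ⟪wstar, x i⟫)
    (err : EuclideanSpace ℝ (Fin d) → ℝ)
    (herr : ∀ w, err w = (1 / (m : ℝ)) * ∑ i, (y i - phi18 ⟪w, x i⟫) ^ 2)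
    (G : EuclideanSpace ℝ (Fin d) → EuclideanSpace ℝ (Fin d))
    (hG : ∀ w, G w = (1 / (m : ℝ)) • ∑ i, (phi18 ⟪w, x i⟫ - y i) • x i)
    (ε : ℝ) (hε : ε ∈ Set.Ioo (0 : ℝ) 1) (w : EuclideanSpace ℝ (Fin d)) :
    err w - err wstar ≤ ε ∨
      (‖G w‖ > 0 ∧ ∀ v ∈ Metric.closedBall wstar (γ * ε / 2), ⟪G w, v - w⟫ ≤ 0) := by
  obtain ⟨hε0, hε1⟩ := hε
  by_cases hcase : err w - err wstar ≤ ε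
  · exact Or.inl hcase
  right
  push_neg at hcase
  have hstar : err wstar = 0 := by
    have h0 : ∀ i ∈ Finset.univ, (y i - phi18 ⟪wstar, x i⟫) ^ 2 = 0 := by
      intro i _; rw [hy i]; ring
    rw [herr, Finset.sum_eq_zero h0, mul_zero]
  have herrw : ε < err w := by linarith
  have hm : 0 < m := by
    by_contra h
    have hm0 : m = 0 := by omega
    subst hm0
    rw [herr] at herrw
    simp at herrw
    linarith
  have hm' : (0:ℝ) < m := by exact_mod_cast hm
  have hexists : ∃ i, y i ≠ phi18 ⟪w, x i⟫ := by
    by_contra h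
    push_neg at h
    have hz : err w = 0 := by
      have h0 : ∀ i ∈ Finset.univ, (y i - phi18 ⟪w, x i⟫) ^ 2 = 0 := by
        intro i _; rw [h i]; ring
      rw [herr, Finset.sum_eq_zero h0, mul_zero]
    linarith
  obtain ⟨i0, hi0⟩ := hexists
  -- per-term bound
  have hterm : ∀ v ∈ Metric.closedBall wstar (γ * ε / 2), ∀ i : Fin m,
      (phi18 ⟪w, x i⟫ - y i) * ⟪x i, v - w⟫ ≤
        if y i = phi18 ⟪w, x i⟫ then 0 else -(γ/2) := by
    intro v hv i
    have hvdist : ‖v - wstar‖ ≤ γ * ε / 2 := by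
      rw [Metric.mem_closedBall, dist_eq_norm] at hv; exact hv
    have hiv : |⟪x i, v - wstar⟫| ≤ γ * ε / 2 := by
      calc |⟪x i, v - wstar⟫| ≤ ‖x i‖ * ‖v - wstar‖ := abs_real_inner_le_norm _ _
        _ ≤ 1 * (γ * ε / 2) := by
            apply mul_le_mul (hx i) hvdist (norm_nonneg _) zero_le_one
        _ = γ * ε / 2 := one_mul _
    have hsplit : ⟪x i, v - w⟫ = ⟪x i, v - wstar⟫ + ⟪x i, wstar⟫ - ⟪x i, w⟫ := by
      have h1 : v - w = (v - wstar) + wstar - w := by abel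
      rw [h1, inner_sub_right, inner_add_right]
    by_cases heq : y i = phi18 ⟪w, x i⟫
    · simp [heq]
    · simp only [heq, if_false]
      have habs := hmargin i
      have hge : γ * ε / 2 ≤ γ / 2 := by nlinarith
      have hb1 := abs_le.mp hiv
      rw [hy i] at heq
      by_cases hws : ⟪wstar, x i⟫ ≥ 0
      · -- y i = 1, phi18 ⟪w, x i⟫ = 0, so ⟪w, x i⟫ < 0
        have hyi : y i = 1 := by rw [hy i, phi18, if_pos hws]
        have hwx : ¬ (⟪w, x i⟫ ≥ 0) := by
          intro h
          exact heq (by rw [phi18, if_pos hws, phi18, if_pos h])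
        have hphiw : phi18 ⟪w, x i⟫ = 0 := by rw [phi18, if_neg hwx]
        push_neg at hwx
        have hmarg : γ ≤ ⟪wstar, x i⟫ := by
          rwa [abs_of_nonneg hws] at habs
        rw [hsplit, hyi, hphiw]
        have hc1 : ⟪x i, wstar⟫ = ⟪wstar, x i⟫ := real_inner_comm _ _
        have hc2 : ⟪x i, w⟫ = ⟪w, x i⟫ := real_inner_comm _ _
        rw [hc1, hc2]
        nlinarith [hb1.1, hb1.2]
      · -- y i = 0, phi18 ⟪w, x i⟫ = 1, so ⟪w, x i⟫ ≥ 0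
        have hyi : y i = 0 := by rw [hy i, phi18, if_neg hws]
        have hwx : ⟪w, x i⟫ ≥ 0 := by
          by_contra h
          exact heq (by rw [phi18, if_neg hws, phi18, if_neg h])
        have hphiw : phi18 ⟪w, x i⟫ = 1 := by rw [phi18, if_pos hwx]
        push_neg at hws
        have hmarg : ⟪wstar, x i⟫ ≤ -γ := by
          rw [abs_of_neg hws] at habs; linarith
        rw [hsplit, hyi, hphiw]
        have hc1 : ⟪x i, wstar⟫ = ⟪wstar, x i⟫ := real_inner_comm _ _
        have hc2 : ⟪x i, w⟫ = ⟪w, x i⟫ := real_inner_comm _ _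
        rw [hc1, hc2]
        nlinarith [hb1.1, hb1.2]
  have hinner : ∀ v : EuclideanSpace ℝ (Fin d),
      ⟪G w, v - w⟫ = (1 / (m : ℝ)) * ∑ i, (phi18 ⟪w, x i⟫ - y i) * ⟪x i, v - w⟫ := by
    intro v
    rw [hG, real_inner_smul_left, sum_inner]
    congr 1
    apply Finset.sum_congr rfl
    intro i _
    rw [real_inner_smul_left]
  have hsum : ∀ v ∈ Metric.closedBall wstar (γ * ε / 2),
      (∑ i, (phi18 ⟪w, x i⟫ - y i) * ⟪x i, v - w⟫) ≤ -(γ/2) := by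
    intro v hv
    have h1 : (∑ i, (phi18 ⟪w, x i⟫ - y i) * ⟪x i, v - w⟫)
        = (phi18 ⟪w, x i0⟫ - y i0) * ⟪x i0, v - w⟫
          + ∑ i ∈ Finset.univ.erase i0, (phi18 ⟪w, x i⟫ - y i) * ⟪x i, v - w⟫ :=
      (Finset.add_sum_erase _ _ (Finset.mem_univ i0)).symm
    rw [h1]
    have h2 : (phi18 ⟪w, x i0⟫ - y i0) * ⟪x i0, v - w⟫ ≤ -(γ/2) := by
      have h := hterm v hv i0
      rwa [if_neg hi0] at h
    have h3 : ∑ i ∈ Finset.univ.erase i0, (phi18 ⟪w, x i⟫ - y i) * ⟪x i, v - w⟫ ≤ 0 := by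
      apply Finset.sum_nonpos
      intro i _
      have := hterm v hv i
      have hle : (if y i = phi18 ⟪w, x i⟫ then (0:ℝ) else -(γ/2)) ≤ 0 := by
        split <;> linarith
      linarith
    linarith
  have hball : wstar ∈ Metric.closedBall wstar (γ * ε / 2) := by
    apply Metric.mem_closedBall_self
    positivity
  have hneg : ⟪G w, wstar - w⟫ < 0 := by
    rw [hinner]
    have := hsum wstar hball
    have h4 : (1 / (m:ℝ)) * (∑ i, (phi18 ⟪w, x i⟫ - y i) * ⟪x i, wstar - w⟫)
        ≤ (1 / (m:ℝ)) * (-(γ/2)) := by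
      apply mul_le_mul_of_nonneg_left this
      positivity
    have h5 : (1 / (m:ℝ)) * (-(γ/2)) < 0 := by
      apply mul_neg_of_pos_of_neg
      · positivity
      · linarith
    linarith
  constructor
  · rw [gt_iff_lt, norm_pos_iff]
    intro h
    rw [h, inner_zero_left] at hneg
    exact lt_irrefl _ hneg
  · intro v hv
    rw [hinner]
    have := hsum v hv
    have h4 : (1 / (m:ℝ)) * (∑ i, (phi18 ⟪w, x i⟫ - y i) * ⟪x i, v - w⟫)
        ≤ (1 / (m:ℝ)) * (-(γ/2)) := by
      apply mul_le_mul_of_nonneg_left this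
      positivity
    have h5 : (1 / (m:ℝ)) * (-(γ/2)) ≤ 0 := by
      apply mul_nonpos_of_nonneg_of_nonpos
      · positivity
      · linarith
    linarith
end

section
/- Let f : ℝ^d → ℝ be differentiable, G-Lipschitz, strictly-quasi-convex, and attain its infimum. Then for every ε > 0 and every pair of points x, z ∈ ℝ^d, f is (ε, G, z)-SLQC at x. -/
open RealInnerProductSpace

theorem stmt_19 {d : ℕ} (G : ℝ) (hG : 0 < G)
    (f : EuclideanSpace ℝ (Fin d) → ℝ) (hf : Differentiable ℝ f)
    (hlip : ∀ x y : EuclideanSpace ℝ (Fin d), |f x - f y| ≤ G * ‖x - y‖)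
    (hqc : ∀ x y : EuclideanSpace ℝ (Fin d), f y ≤ f x → ⟪gradient f x, y - x⟫ ≤ 0)
    (hstrict : ∀ y : EuclideanSpace ℝ (Fin d), f y > ⨅ z, f z → gradient f y ≠ 0)
    (hattain : ∃ xstar : EuclideanSpace ℝ (Fin d), ∀ y, f xstar ≤ f y) :
    ∀ (ε : ℝ), 0 < ε → ∀ x z : EuclideanSpace ℝ (Fin d),
      f x - f z ≤ ε ∨
        (gradient f x ≠ 0 ∧
          ∀ y ∈ Metric.closedBall z (ε / G), ⟪gradient f x, y - x⟫ ≤ 0) := by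
  intro ε hε x z
  by_cases h : f x - f z ≤ ε
  · exact Or.inl h
  push_neg at h
  obtain ⟨xstar, hxstar⟩ := hattain
  right
  constructor
  · apply hstrict
    have hinf : (⨅ w, f w) = f xstar :=
      le_antisymm (ciInf_le ⟨f xstar, fun a ⟨w, hw⟩ => hw ▸ hxstar w⟩ xstar)
        (le_ciInf hxstar)
    rw [hinf]
    have := hxstar z
    linarith
  · intro y hy
    apply hqc
    rw [Metric.mem_closedBall, dist_eq_norm] at hy
    have := hlip y z
    have h2 : G * ‖y - z‖ ≤ G * (ε / G) := by
      exact mul_le_mul_of_nonneg_left hy hG.le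
    rw [mul_div_cancel₀ _ hG.ne'] at h2
    have habs := abs_le.mp (this.trans h2)
    linarith [habs.1, habs.2]
end
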